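/- (Riemann–Lebesgue lemma for nonlinear Fourier coefficients) For f ∈ L¹(𝕋), the nonlinear Fourier coefficients c_k^a(f) = (1/2π)∫_{-π}^{π} f(t)e^{-ikθ_a(t)} p_a(t) dt tend to 0 as |k| → ∞. -/

import Mathlib

open Real MeasureTheory Filter

/-- The Poisson kernel associated with `a = |a| e^{i t_a}`. -/
noncomputable def poisson (a : ℂ) (ta : ℝ) (t : ℝ) : ℝ :=
  (1 - ‖a‖ ^ 2) / (1 - 2 * ‖a‖ * Real.cos (t - ta) + ‖a‖ ^ 2)

/-- The `k`-th nonlinear Fourier coefficient of `f`. -/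
noncomputable def coeff (θ p : ℝ → ℝ) (f : ℝ → ℂ) (k : ℤ) : ℂ :=
  (1 / (2 * π)) * ∫ t in (-π)..π,
    f t * Complex.exp (-(Complex.I * (k : ℂ) * (θ t : ℂ))) * (p t : ℂ)

theorem riemann_lebesgue_nonlinear_coefficients
    (a : ℂ) (ha : ‖a‖ < 1) (ta : ℝ) (hA : a = (‖a‖ : ℂ) * Complex.exp (Complex.I * (ta : ℂ)))
    (θ : ℝ → ℝ) (hθc : Continuous θ) (hθm : StrictMono θ)
    (hper : ∀ t : ℝ, θ (t + 2 * π) = θ t + 2 * π)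
    (hderiv : ∀ t : ℝ, HasDerivAt θ (poisson a ta t) t)
    (f : ℝ → ℂ) (hfm : Measurable f) (hfper : Function.Periodic f (2 * π))
    (hfi : IntervalIntegrable f MeasureTheory.volume (-π) π) :
    Tendsto (fun k : ℤ => coeff θ (poisson a ta) f k) (Filter.cocompact ℤ) (nhds 0) := by
  have hπ : (0:ℝ) < π := Real.pi_pos
  -- positivity of the Poisson kernel
  have hp : ∀ t, 0 < poisson a ta t := by
    intro t
    have h1 : (0:ℝ) ≤ ‖a‖ := norm_nonneg a
    have h2 : Real.cos (t - ta) ≤ 1 := Real.cos_le_one _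
    apply div_pos
    · nlinarith
    · nlinarith [sq_nonneg (1 - ‖a‖)]
  -- quasi-periodicity for all integers
  have hθz : ∀ n : ℤ, ∀ t : ℝ, θ (t + 2 * π * n) = θ t + 2 * π * n := by
    have hu : Function.Periodic (fun t => θ t - t) (2 * π) := by
      intro t; simp only [hper t]; ring
    intro n t
    have := (hu.int_mul n) t
    have harg : t + (n : ℝ) * (2 * π) = t + 2 * π * n := by ring
    rw [harg] at this
    linarith
  -- surjectivity of θ
  have hsurj : Function.Surjective θ := by
    intro y
    obtain ⟨N, hN⟩ := exists_nat_ge (|y - θ 0| / (2 * π))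
    have h2π : (0:ℝ) < 2 * π := by linarith
    have habs : |y - θ 0| ≤ 2 * π * N := by
      rw [div_le_iff₀ h2π] at hN; linarith
    rw [abs_le] at habs
    have hlo : θ (-(2 * π * N)) = θ 0 - 2 * π * N := by
      have := hθz (-(N : ℤ)) 0
      push_cast at this
      rw [show (0:ℝ) + 2 * π * (-(N:ℝ)) = -(2 * π * N) by ring] at this
      linarith
    have hhi : θ (2 * π * N) = θ 0 + 2 * π * N := by
      have := hθz (N : ℤ) 0
      push_cast at this
      rw [show (0:ℝ) + 2 * π * (N:ℝ) = 2 * π * N by ring] at this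
      linarith
    have hle : -(2 * π * (N:ℝ)) ≤ 2 * π * N := by nlinarith [Nat.cast_nonneg (α := ℝ) N]
    have hmem : y ∈ Set.Icc (θ (-(2 * π * N))) (θ (2 * π * N)) := by
      rw [hlo, hhi]; constructor <;> linarith [habs.1, habs.2]
    obtain ⟨t, _, ht⟩ := intermediate_value_Icc hle hθc.continuousOn hmem
    exact ⟨t, ht⟩
  -- the order isomorphism and its inverse
  let e : ℝ ≃o ℝ := StrictMono.orderIsoOfSurjective θ hθm hsurj
  have hec : ⇑e = θ := rfl
  let φ : ℝ → ℝ := ⇑e.symm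
  have hφc : Continuous φ := OrderIso.continuous e.symm
  have hφθ : ∀ t, φ (θ t) = t := fun t => e.symm_apply_apply t
  let h : ℝ → ℂ := fun s => f (φ s)
  let A : Set ℝ := Set.Ioc (θ (-π)) (θ π)
  have himg : θ '' Set.Ioc (-π) π = A := by
    rw [← hec]; exact e.image_Ioc _ _
  let F : ℝ → ℂ := A.indicator h
  -- key identity
  have key : ∀ k : ℤ, coeff θ (poisson a ta) f k
      = (1/(2*π) : ℂ) * ∫ v : ℝ, Real.fourierChar (-(v * ((k:ℝ)/(2*π)))) • F v := by
    intro k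
    rw [coeff]
    congr 1
    rw [intervalIntegral.integral_of_le (by linarith)]
    have hcv := integral_image_eq_integral_abs_deriv_smul
      (s := Set.Ioc (-π) π) (f := θ) (f' := poisson a ta) measurableSet_Ioc
      (fun x _ => (hderiv x).hasDerivWithinAt) hθm.injective.injOn
      (fun s => h s * Complex.exp (-(Complex.I * k * s)))
    rw [himg] at hcv
    have step1 : (∫ t in Set.Ioc (-π) π,
        f t * Complex.exp (-(Complex.I * (k : ℂ) * (θ t : ℂ))) * (poisson a ta t : ℂ))
        = ∫ x in A, h x * Complex.exp (-(Complex.I * k * x)) := by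
      rw [hcv]
      apply setIntegral_congr_fun measurableSet_Ioc
      intro x _
      simp only [h, hφθ x, abs_of_pos (hp x), Complex.real_smul]
      ring
    rw [step1, ← integral_indicator measurableSet_Ioc]
    apply integral_congr_ae
    filter_upwards with v
    by_cases hv : v ∈ A
    · simp only [F, Set.indicator_of_mem hv, Set.indicator_of_mem (show v ∈ Set.Ioc (θ (-π)) (θ π) from hv)]
      rw [Circle.smul_def, Real.fourierChar_apply]
      have harg : 2 * π * -(v * ((k:ℝ)/(2*π))) = -(v * k) := by
        field_simp
      rw [harg]
      rw [mul_comm]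
      congr 1
      push_cast
      ring
    · simp only [F, Set.indicator_of_notMem hv, Set.indicator_of_notMem (show v ∉ Set.Ioc (θ (-π)) (θ π) from hv), smul_zero]
  -- the map k ↦ k / (2π) is cocompact-to-cocompact
  have h1 : Tendsto (fun k : ℤ => (k:ℝ)/(2*π)) (cocompact ℤ) (cocompact ℝ) := by
    rw [cocompact_eq_cofinite]
    have hne : ((2*π)⁻¹ : ℝ) ≠ 0 := by positivity
    have h2 : Tendsto (fun x : ℝ => x * (2*π)⁻¹) (cocompact ℝ) (cocompact ℝ) := by
      have hmc := Homeomorph.map_cocompact (Homeomorph.mulRight₀ ((2*π)⁻¹ : ℝ) hne)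
      have h2' : Tendsto (⇑(Homeomorph.mulRight₀ ((2*π)⁻¹ : ℝ) hne)) (cocompact ℝ) (cocompact ℝ) := by
        have hm := Filter.tendsto_map (f := ⇑(Homeomorph.mulRight₀ ((2*π)⁻¹ : ℝ) hne)) (x := cocompact ℝ)
        rwa [hmc] at hm
      simpa using h2'
    have := h2.comp Int.tendsto_coe_cofinite
    simpa [div_eq_mul_inv, Function.comp_def] using this
  have h3 := (Real.tendsto_integral_exp_smul_cocompact F).comp h1
  have h4 := h3.const_mul ((1/(2*π) : ℂ))
  rw [mul_zero] at h4
  refine h4.congr fun k => ?_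
  simp only [Function.comp_apply]
  rw [key k]
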